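/- (Theorem 5.2, 'if' direction.) Let n ≥ 2, let 0 ≤ i ≤ n−3, and let σ, γ ∈ Equiv.Perm (Fin n). Let H_i be the subgroup of Equiv.Perm (Fin n) generated by the adjacent transpositions s_m that are disjoint from s_i and s_{i+1}, i.e., by {s_m : m ≤ i−2 or m ≥ i+3}. If σ⁻¹γ ∈ H_i, then there exist words u, v over {0,…,n−2} with π(u) = σ, π(v) = γ, and u ++ c_i ++ reverse(u) ≈ v ++ c_i ++ reverse(v); that is, the primitive 6-cycles based at σ and at γ with transpositions s_i, s_{i+1} are G-homotopic. -/

import Mathlib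

/-- The adjacent transposition `s_j = (j, j+1)` in the symmetric group on `Fin n`,
indexed by `j : Fin (n-1)`. -/
def s {n : ℕ} (j : Fin (n - 1)) : Equiv.Perm (Fin n) :=
  Equiv.swap ⟨j.val, by have := j.isLt; omega⟩ ⟨j.val + 1, by have := j.isLt; omega⟩

/-- `π` sends a word `[j₁, …, j_r]` over the alphabet `{0, …, n-2}` to the product
`s_{j₁} ⋯ s_{j_r}`. -/
def π {n : ℕ} (w : List (Fin (n - 1))) : Equiv.Perm (Fin n) :=
  (w.map s).prod

/-- The two elementary moves on words: (T2) insertion of a square `[j, j]`, and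
(T3) commutation of two letters `j, k` with `|j - k| ≥ 2`. -/
inductive Move {n : ℕ} : List (Fin (n - 1)) → List (Fin (n - 1)) → Prop
  | t2 (u v : List (Fin (n - 1))) (j : Fin (n - 1)) :
      Move (u ++ v) (u ++ [j, j] ++ v)
  | t3 (u v : List (Fin (n - 1))) (j k : Fin (n - 1))
      (h : j.val + 2 ≤ k.val ∨ k.val + 2 ≤ j.val) :
      Move (u ++ [j, k] ++ v) (u ++ [k, j] ++ v)

/-- The equivalence `≈` on words: the reflexive–symmetric–transitive closure of the
moves (T2) and (T3). -/
def WEquiv {n : ℕ} : List (Fin (n - 1)) → List (Fin (n - 1)) → Prop :=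
  Relation.EqvGen Move

/-- The word `c_i = [i, i+1, i, i+1, i, i+1]` labelling a primitive 6-cycle of the
permutahedron graph, defined for `i + 3 ≤ n` (i.e. `0 ≤ i ≤ n-3`). -/
def cword {n : ℕ} (i : ℕ) (hi : i + 3 ≤ n) : List (Fin (n - 1)) :=
  [⟨i, by omega⟩, ⟨i + 1, by omega⟩, ⟨i, by omega⟩,
   ⟨i + 1, by omega⟩, ⟨i, by omega⟩, ⟨i + 1, by omega⟩]

/-! ### Auxiliary lemmas -/

lemma pi_append {n : ℕ} (a b : List (Fin (n-1))) : π (a ++ b) = π a * π b := by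
  simp [π]

lemma s_inv {n : ℕ} (j : Fin (n-1)) : (s j)⁻¹ = s (n := n) j := by
  simp [s]

lemma pi_reverse {n : ℕ} (w : List (Fin (n-1))) : π w.reverse = (π w)⁻¹ := by
  induction w with
  | nil => simp [π]
  | cons a w ih =>
    rw [List.reverse_cons, pi_append, ih]
    have h1 : π (a :: w) = s a * π w := by simp [π]
    have h2 : π [a] = s a := by simp [π]
    rw [h1, mul_inv_rev, h2, s_inv]

lemma exists_word {n : ℕ} (hn : 2 ≤ n) (σ : Equiv.Perm (Fin n)) :
    ∃ w : List (Fin (n-1)), π w = σ := by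
  have hnn : (n-1)+1 = n := by omega
  set e : Fin ((n-1)+1) ≃ Fin n := finCongr hnn with he
  have hmul : ∀ p q : Equiv.Perm (Fin ((n-1)+1)),
      e.permCongr (p * q) = e.permCongr p * e.permCongr q := by
    intro p q; ext x; simp [Equiv.permCongr_apply, Equiv.Perm.mul_apply]
  have top : e.symm.permCongr σ ∈ Submonoid.closure
      (Set.range fun i : Fin (n-1) ↦ Equiv.swap i.castSucc i.succ) := by
    rw [Equiv.Perm.mclosure_swap_castSucc_succ]; trivial
  have key : ∃ w : List (Fin (n-1)), π w = e.permCongr (e.symm.permCongr σ) := by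
    refine Submonoid.closure_induction ?_ ?_ ?_ top
    · rintro g ⟨i, rfl⟩
      refine ⟨[i], ?_⟩
      have h2 : π [i] = s i := by simp [π]
      rw [h2, Equiv.permCongr_def, Equiv.symm_trans_swap_trans]
      congr 1
    · exact ⟨[], by ext x; simp [π, Equiv.permCongr_apply]⟩
    · rintro p q _ _ ⟨w1, hw1⟩ ⟨w2, hw2⟩
      exact ⟨w1 ++ w2, by rw [pi_append, hw1, hw2, hmul]⟩
  have hσ : e.permCongr (e.symm.permCongr σ) = σ := by
    ext x; simp [Equiv.permCongr_apply]
  rwa [hσ] at key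

lemma Move.append_left' {n : ℕ} {a b : List (Fin (n-1))} (x : List (Fin (n-1)))
    (h : Move a b) : Move (x ++ a) (x ++ b) := by
  cases h with
  | t2 u v j => simpa [List.append_assoc] using Move.t2 (x ++ u) v j
  | t3 u v j k hjk => simpa [List.append_assoc] using Move.t3 (x ++ u) v j k hjk

lemma Move.append_right' {n : ℕ} {a b : List (Fin (n-1))} (y : List (Fin (n-1)))
    (h : Move a b) : Move (a ++ y) (b ++ y) := by
  cases h with
  | t2 u v j => simpa [List.append_assoc] using Move.t2 u (v ++ y) j
  | t3 u v j k hjk => simpa [List.append_assoc] using Move.t3 u (v ++ y) j k hjk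

lemma WEquiv.append_left {n : ℕ} {a b : List (Fin (n-1))} (x : List (Fin (n-1)))
    (h : WEquiv a b) : WEquiv (x ++ a) (x ++ b) := by
  induction h with
  | rel a b h => exact Relation.EqvGen.rel _ _ (h.append_left' x)
  | refl a => exact Relation.EqvGen.refl _
  | symm _ _ _ ih => exact Relation.EqvGen.symm _ _ ih
  | trans _ _ _ _ _ ih1 ih2 => exact Relation.EqvGen.trans _ _ _ ih1 ih2

lemma WEquiv.append_right {n : ℕ} {a b : List (Fin (n-1))} (y : List (Fin (n-1)))
    (h : WEquiv a b) : WEquiv (a ++ y) (b ++ y) := by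
  induction h with
  | rel a b h => exact Relation.EqvGen.rel _ _ (h.append_right' y)
  | refl a => exact Relation.EqvGen.refl _
  | symm _ _ _ ih => exact Relation.EqvGen.symm _ _ ih
  | trans _ _ _ _ _ ih1 ih2 => exact Relation.EqvGen.trans _ _ _ ih1 ih2

/-- Move a letter commuting with every letter of `l` from front to back. -/
lemma wequiv_cons_comm {n : ℕ} (m : Fin (n-1)) (l : List (Fin (n-1)))
    (hl : ∀ k ∈ l, k.val + 2 ≤ m.val ∨ m.val + 2 ≤ k.val) :
    WEquiv (m :: l) (l ++ [m]) := by
  induction l with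
  | nil => exact Relation.EqvGen.refl _
  | cons k l ih =>
    have hcond := hl k List.mem_cons_self
    have h1 : Move (m :: k :: l) (k :: m :: l) := by
      simpa using Move.t3 [] l m k (Or.symm hcond)
    have h2 : WEquiv (k :: (m :: l)) (k :: (l ++ [m])) :=
      WEquiv.append_left [k] (ih fun x hx => hl x (List.mem_cons_of_mem _ hx))
    exact Relation.EqvGen.trans _ _ _ (Relation.EqvGen.rel _ _ h1) h2

/-- Conjugating by a single commuting letter. -/
lemma wequiv_conj_single {n : ℕ} (m : Fin (n-1)) (c : List (Fin (n-1)))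
    (hl : ∀ k ∈ c, k.val + 2 ≤ m.val ∨ m.val + 2 ≤ k.val) :
    WEquiv c (m :: (c ++ [m])) := by
  have h1 : WEquiv (m :: (c ++ [m])) ((c ++ [m]) ++ [m]) := by
    have := (wequiv_cons_comm m c hl).append_right [m]
    simpa [List.append_assoc] using this
  have h2 : Move (c ++ ([] : List (Fin (n-1)))) (c ++ [m, m] ++ []) := Move.t2 c [] m
  have h3 : WEquiv c ((c ++ [m]) ++ [m]) := by
    have := Relation.EqvGen.rel _ _ h2
    simpa [WEquiv, List.append_assoc] using this
  exact Relation.EqvGen.trans _ _ _ h3 (Relation.EqvGen.symm _ _ h1)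

/-- Conjugating `c` by a word all of whose letters commute with every letter of `c`. -/
lemma wequiv_conj {n : ℕ} (c : List (Fin (n-1))) (w : List (Fin (n-1)))
    (hw : ∀ m ∈ w, ∀ k ∈ c, k.val + 2 ≤ m.val ∨ m.val + 2 ≤ k.val) :
    WEquiv c (w ++ c ++ w.reverse) := by
  induction w with
  | nil => simpa [WEquiv] using Relation.EqvGen.refl (r := Move) c
  | cons m w ih =>
    have ih' : WEquiv c (w ++ c ++ w.reverse) :=
      ih fun x hx => hw x (List.mem_cons_of_mem _ hx)
    have h1 : WEquiv c (m :: (c ++ [m])) :=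
      wequiv_conj_single m c (hw m List.mem_cons_self)
    have h2 : WEquiv (m :: (c ++ [m])) (m :: ((w ++ c ++ w.reverse) ++ [m])) := by
      have := (ih'.append_right [m]).append_left [m]
      simpa using this
    have h3 : WEquiv c (m :: ((w ++ c ++ w.reverse) ++ [m])) :=
      Relation.EqvGen.trans _ _ _ h1 h2
    have heq : (m :: w) ++ c ++ (m :: w).reverse
        = m :: ((w ++ c ++ w.reverse) ++ [m]) := by
      simp [List.append_assoc]
    rw [heq]
    exact h3

/-- Theorem 5.2, 'if' direction: if `σ⁻¹γ` lies in the subgroup generated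
by the adjacent transpositions disjoint from `s_i` and `s_{i+1}` (those `s_m` with
`m ≤ i-2` or `m ≥ i+3`), then the primitive 6-cycles based at `σ` and at `γ` with
transpositions `s_i, s_{i+1}` are G-homotopic. -/
theorem wequiv_of_mem_disjoint_closure {n : ℕ} (hn : 2 ≤ n) (i : ℕ) (hi : i + 3 ≤ n)
    (σ γ : Equiv.Perm (Fin n))
    (h : σ⁻¹ * γ ∈ Subgroup.closure {g : Equiv.Perm (Fin n) |
      ∃ m : Fin (n - 1), (m.val + 2 ≤ i ∨ i + 3 ≤ m.val) ∧ g = s m}) :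
    ∃ u v : List (Fin (n - 1)), π u = σ ∧ π v = γ ∧
      WEquiv (u ++ cword i hi ++ u.reverse) (v ++ cword i hi ++ v.reverse) := by
  obtain ⟨u, hu⟩ := exists_word hn σ
  -- extract a word of "good" letters representing σ⁻¹γ
  have hword : ∃ w : List (Fin (n-1)),
      (∀ m ∈ w, m.val + 2 ≤ i ∨ i + 3 ≤ m.val) ∧ π w = σ⁻¹ * γ := by
    refine Subgroup.closure_induction ?_ ?_ ?_ ?_ h
    · rintro g ⟨m, hm, rfl⟩
      exact ⟨[m], by simpa using hm, by simp [π]⟩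
    · exact ⟨[], by simp, by simp [π]⟩
    · rintro p q _ _ ⟨w1, hg1, hw1⟩ ⟨w2, hg2, hw2⟩
      refine ⟨w1 ++ w2, ?_, by rw [pi_append, hw1, hw2]⟩
      intro m hm
      rcases List.mem_append.mp hm with h' | h'
      · exact hg1 m h'
      · exact hg2 m h'
    · rintro p _ ⟨w, hg, hw⟩
      exact ⟨w.reverse, fun m hm => hg m (List.mem_reverse.mp hm),
        by rw [pi_reverse, hw]⟩
  obtain ⟨w, hgood, hw⟩ := hword
  refine ⟨u, u ++ w, hu, ?_, ?_⟩
  · rw [pi_append, hu, hw, mul_inv_cancel_left]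
  · have hcomm : ∀ m ∈ w, ∀ k ∈ cword i hi,
        k.val + 2 ≤ m.val ∨ m.val + 2 ≤ k.val := by
      intro m hm k hk
      have hg := hgood m hm
      have : k.val = i ∨ k.val = i + 1 := by
        simp only [cword, List.mem_cons, List.not_mem_nil, or_false] at hk
        rcases hk with rfl | rfl | rfl | rfl | rfl | rfl <;> simp
      omega
    have key : WEquiv (cword i hi) (w ++ cword i hi ++ w.reverse) :=
      wequiv_conj _ w hcomm
    have main := (key.append_right u.reverse).append_left u
    have heq : (u ++ w) ++ cword i hi ++ (u ++ w).reverse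
        = u ++ (w ++ cword i hi ++ w.reverse) ++ u.reverse := by
      simp [List.append_assoc]
    rw [heq]
    simpa [List.append_assoc] using main
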